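/- (Involutivity of the Hamiltonian vector fields on the common zero set.) Let f₁,…,f_k : ℝ^n × ℝ^n → ℝ be smooth functions with {f_i, f_j} = Σ_{m=1}^k a^{ij}_m f_m pointwise for some smooth functions a^{ij}_m. Then at every point x with f₁(x) = ⋯ = f_k(x) = 0, the commutator [X_{f_i}, X_{f_j}](x) lies in the real linear span of the vectors X_{f₁}(x), …, X_{f_k}(x); specifically [X_{f_i}, X_{f_j}](x) = −Σ_m a^{ij}_m(x) X_{f_m}(x). -/

import Mathlib

open scoped BigOperators

/-- The `i`-th coordinate direction in the `q` (position) factor of phase space `ℝⁿ × ℝⁿ`. -/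
noncomputable def eQ (n : ℕ) (i : Fin n) : (Fin n → ℝ) × (Fin n → ℝ) :=
  (Pi.single i 1, 0)

/-- The `i`-th coordinate direction in the `p` (momentum) factor of phase space `ℝⁿ × ℝⁿ`. -/
noncomputable def eP (n : ℕ) (i : Fin n) : (Fin n → ℝ) × (Fin n → ℝ) :=
  (0, Pi.single i 1)

/-- The canonical Poisson bracket `{f,g} = Σᵢ (∂f/∂qⁱ ∂g/∂pᵢ − ∂f/∂pᵢ ∂g/∂qⁱ)` on `ℝⁿ × ℝⁿ`. -/
noncomputable def poissonBracket {n : ℕ} (f g : (Fin n → ℝ) × (Fin n → ℝ) → ℝ)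
    (x : (Fin n → ℝ) × (Fin n → ℝ)) : ℝ :=
  ∑ i : Fin n, (fderiv ℝ f x (eQ n i) * fderiv ℝ g x (eP n i)
    - fderiv ℝ f x (eP n i) * fderiv ℝ g x (eQ n i))

/-- The Hamiltonian vector field `X_f = (∂f/∂p₁,…,∂f/∂pₙ, −∂f/∂q¹,…,−∂f/∂qⁿ)` on `ℝⁿ × ℝⁿ`. -/
noncomputable def hamVF {n : ℕ} (f : (Fin n → ℝ) × (Fin n → ℝ) → ℝ)
    (x : (Fin n → ℝ) × (Fin n → ℝ)) : (Fin n → ℝ) × (Fin n → ℝ) :=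
  (fun i => fderiv ℝ f x (eP n i), fun i => - fderiv ℝ f x (eQ n i))

section AuxLemmas

variable {n : ℕ}

private lemma aux_le1 : (1 : WithTop ℕ∞) ≤ ((⊤ : ℕ∞) : WithTop ℕ∞) := by norm_cast
private lemma aux_le2 : (2 : WithTop ℕ∞) ≤ ((⊤ : ℕ∞) : WithTop ℕ∞) := by norm_cast
private lemma aux_le11 : (1 : WithTop ℕ∞) + 1 ≤ ((⊤ : ℕ∞) : WithTop ℕ∞) := by norm_cast

/-- Every phase-space vector is the obvious combination of the basis vectors `eQ`, `eP`. -/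
lemma basis_decomp (v : (Fin n → ℝ) × (Fin n → ℝ)) :
    v = (∑ s, v.1 s • eQ n s) + ∑ s, v.2 s • eP n s := by
  refine Prod.ext ?_ ?_ <;>
  · funext r
    simp [eQ, eP, Prod.fst_sum, Prod.snd_sum, Finset.sum_apply, Pi.single_apply, mul_comm]

/-- A continuous linear functional evaluated via the basis decomposition. -/
lemma clm_decomp (B : ((Fin n → ℝ) × (Fin n → ℝ)) →L[ℝ] ℝ) (v : (Fin n → ℝ) × (Fin n → ℝ)) :
    B v = (∑ s, v.1 s * B (eQ n s)) + ∑ s, v.2 s * B (eP n s) := by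
  conv_lhs => rw [basis_decomp v]
  simp [map_sum, smul_eq_mul]

/-- Derivative of a directional derivative of a smooth function. -/
lemma hasFDerivAt_dirDeriv {g : (Fin n → ℝ) × (Fin n → ℝ) → ℝ}
    (hg : ContDiff ℝ (⊤ : ℕ∞) g) (x c : (Fin n → ℝ) × (Fin n → ℝ)) :
    HasFDerivAt (fun y => fderiv ℝ g y c)
      ((ContinuousLinearMap.apply ℝ ℝ c).comp (fderiv ℝ (fderiv ℝ g) x)) x := by
  have hA : HasFDerivAt (fderiv ℝ g) (fderiv ℝ (fderiv ℝ g) x) x :=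
    (((hg.fderiv_right aux_le11).differentiable one_ne_zero) x).hasFDerivAt
  exact (ContinuousLinearMap.apply ℝ ℝ c).hasFDerivAt.comp x hA

/-- The derivative of the Hamiltonian vector field, applied to a vector. -/
lemma fderiv_hamVF_apply {g : (Fin n → ℝ) × (Fin n → ℝ) → ℝ}
    (hg : ContDiff ℝ (⊤ : ℕ∞) g) (x v : (Fin n → ℝ) × (Fin n → ℝ)) :
    fderiv ℝ (hamVF g) x v
      = (fun r => fderiv ℝ (fderiv ℝ g) x v (eP n r),
         fun r => - fderiv ℝ (fderiv ℝ g) x v (eQ n r)) := by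
  set A := fderiv ℝ (fderiv ℝ g) x
  have h1 : HasFDerivAt (fun y => (fun r => fderiv ℝ g y (eP n r)))
      (ContinuousLinearMap.pi fun r => (ContinuousLinearMap.apply ℝ ℝ (eP n r)).comp A) x := by
    apply hasFDerivAt_pi'.2
    intro r
    simpa using hasFDerivAt_dirDeriv hg x (eP n r)
  have h2 : HasFDerivAt (fun y => (fun r => - fderiv ℝ g y (eQ n r)))
      (-(ContinuousLinearMap.pi fun r => (ContinuousLinearMap.apply ℝ ℝ (eQ n r)).comp A)) x := by
    apply HasFDerivAt.neg
    apply hasFDerivAt_pi'.2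
    intro r
    simpa using hasFDerivAt_dirDeriv hg x (eQ n r)
  have h : HasFDerivAt (hamVF g) (ContinuousLinearMap.prod
      (ContinuousLinearMap.pi fun r => (ContinuousLinearMap.apply ℝ ℝ (eP n r)).comp A)
      (-(ContinuousLinearMap.pi fun r => (ContinuousLinearMap.apply ℝ ℝ (eQ n r)).comp A))) x :=
    HasFDerivAt.prodMk h1 h2
  rw [h.fderiv]
  rfl

/-- The derivative of the Poisson bracket of two smooth functions. -/
lemma fderiv_poisson {f g : (Fin n → ℝ) × (Fin n → ℝ) → ℝ}
    (hf : ContDiff ℝ (⊤ : ℕ∞) f) (hg : ContDiff ℝ (⊤ : ℕ∞) g)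
    (x c : (Fin n → ℝ) × (Fin n → ℝ)) :
    fderiv ℝ (poissonBracket f g) x c
      = ∑ s, (fderiv ℝ (fderiv ℝ f) x c (eQ n s) * fderiv ℝ g x (eP n s)
            + fderiv ℝ f x (eQ n s) * fderiv ℝ (fderiv ℝ g) x c (eP n s)
            - (fderiv ℝ (fderiv ℝ f) x c (eP n s) * fderiv ℝ g x (eQ n s)
            + fderiv ℝ f x (eP n s) * fderiv ℝ (fderiv ℝ g) x c (eQ n s))) := by
  have h : HasFDerivAt (poissonBracket f g)
      (∑ s, ((fderiv ℝ f x (eQ n s) •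
            ((ContinuousLinearMap.apply ℝ ℝ (eP n s)).comp (fderiv ℝ (fderiv ℝ g) x))
          + fderiv ℝ g x (eP n s) •
            ((ContinuousLinearMap.apply ℝ ℝ (eQ n s)).comp (fderiv ℝ (fderiv ℝ f) x)))
        - (fderiv ℝ f x (eP n s) •
            ((ContinuousLinearMap.apply ℝ ℝ (eQ n s)).comp (fderiv ℝ (fderiv ℝ g) x))
          + fderiv ℝ g x (eQ n s) •
            ((ContinuousLinearMap.apply ℝ ℝ (eP n s)).comp (fderiv ℝ (fderiv ℝ f) x))))) x := by
    apply HasFDerivAt.fun_sum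
    intro s _
    exact ((hasFDerivAt_dirDeriv hf x (eQ n s)).mul (hasFDerivAt_dirDeriv hg x (eP n s))).sub
      ((hasFDerivAt_dirDeriv hf x (eP n s)).mul (hasFDerivAt_dirDeriv hg x (eQ n s)))
  rw [h.fderiv]
  simp only [ContinuousLinearMap.sum_apply, ContinuousLinearMap.sub_apply,
    ContinuousLinearMap.add_apply, ContinuousLinearMap.smul_apply,
    ContinuousLinearMap.comp_apply, ContinuousLinearMap.apply_apply, smul_eq_mul]
  apply Finset.sum_congr rfl
  intro s _
  ring

/-- Derivative of `∑ aₘ fₘ` at a common zero of the `fₘ`. -/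
lemma fderiv_sum_mul {k : ℕ} {a f : Fin k → (Fin n → ℝ) × (Fin n → ℝ) → ℝ}
    (ha : ∀ m, ContDiff ℝ (⊤ : ℕ∞) (a m)) (hf : ∀ m, ContDiff ℝ (⊤ : ℕ∞) (f m))
    (x c : (Fin n → ℝ) × (Fin n → ℝ)) (hx : ∀ m, f m x = 0) :
    fderiv ℝ (fun y => ∑ m, a m y * f m y) x c = ∑ m, a m x * fderiv ℝ (f m) x c := by
  have h : HasFDerivAt (fun y => ∑ m, a m y * f m y)
      (∑ m, (a m x • fderiv ℝ (f m) x + f m x • fderiv ℝ (a m) x)) x := by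
    apply HasFDerivAt.fun_sum
    intro m _
    exact (((ha m).differentiable (by simp) x).hasFDerivAt).mul
      (((hf m).differentiable (by simp) x).hasFDerivAt)
  rw [h.fderiv]
  simp [hx, ContinuousLinearMap.sum_apply]

end AuxLemmas

/-- (Involutivity of the Hamiltonian vector fields on the common zero set.)
If `{fᵢ,fⱼ} = Σₘ aᵢⱼₘ fₘ` pointwise, then at every common zero `x` of the `fₘ` the
commutator `[X_{fᵢ}, X_{fⱼ}](x)` equals `−Σₘ aᵢⱼₘ(x) X_{fₘ}(x)`; in particular it lies in
the real linear span of the vectors `X_{f₁}(x),…,X_{f_k}(x)`. -/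
theorem commutator_hamVF_mem_span_on_common_zero {n k : ℕ}
    (f : Fin k → (Fin n → ℝ) × (Fin n → ℝ) → ℝ)
    (a : Fin k → Fin k → Fin k → (Fin n → ℝ) × (Fin n → ℝ) → ℝ)
    (hf : ∀ i, ContDiff ℝ (⊤ : ℕ∞) (f i))
    (ha : ∀ i j m, ContDiff ℝ (⊤ : ℕ∞) (a i j m))
    (hinv : ∀ i j x, poissonBracket (f i) (f j) x = ∑ m, a i j m x * f m x)
    (i j : Fin k) (x : (Fin n → ℝ) × (Fin n → ℝ)) (hx : ∀ m, f m x = 0) :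
    fderiv ℝ (hamVF (f j)) x (hamVF (f i) x) - fderiv ℝ (hamVF (f i)) x (hamVF (f j) x)
        = -∑ m, a i j m x • hamVF (f m) x ∧
    fderiv ℝ (hamVF (f j)) x (hamVF (f i) x) - fderiv ℝ (hamVF (f i)) x (hamVF (f j) x)
        ∈ Submodule.span ℝ (Set.range fun m => hamVF (f m) x) := by
  have hsymi : ∀ v w, fderiv ℝ (fderiv ℝ (f i)) x v w = fderiv ℝ (fderiv ℝ (f i)) x w v :=
    ((hf i).contDiffAt.isSymmSndFDerivAt (by simpa using aux_le2)).eq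
  have hsymj : ∀ v w, fderiv ℝ (fderiv ℝ (f j)) x v w = fderiv ℝ (fderiv ℝ (f j)) x w v :=
    ((hf j).contDiffAt.isSymmSndFDerivAt (by simpa using aux_le2)).eq
  set Bi := fderiv ℝ (fderiv ℝ (f i)) x with hBi
  set Bj := fderiv ℝ (fderiv ℝ (f j)) x with hBj
  set u := hamVF (f i) x with hu
  set w := hamVF (f j) x with hw
  -- key identity from differentiating `{f i, f j} = ∑ a • f` at the common zero
  have key : ∀ c, ∑ s, (Bi c (eQ n s) * fderiv ℝ (f j) x (eP n s)
      + fderiv ℝ (f i) x (eQ n s) * Bj c (eP n s)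
      - (Bi c (eP n s) * fderiv ℝ (f j) x (eQ n s)
      + fderiv ℝ (f i) x (eP n s) * Bj c (eQ n s)))
      = ∑ m, a i j m x * fderiv ℝ (f m) x c := by
    intro c
    have hfun : poissonBracket (f i) (f j) = fun y => ∑ m, a i j m y * f m y :=
      funext fun y => hinv i j y
    rw [← fderiv_poisson (hf i) (hf j) x c, hfun,
      fderiv_sum_mul (fun m => ha i j m) hf x c hx]
  -- the scalar commutator identity in every direction
  have comp : ∀ c, Bj u c - Bi w c = -(∑ m, a i j m x * fderiv ℝ (f m) x c) := by
    intro c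
    rw [← key c]
    have e1 : Bj u c = (∑ s, u.1 s * Bj (eQ n s) c) + ∑ s, u.2 s * Bj (eP n s) c := by
      have := clm_decomp (Bj.flip c) u
      simpa using this
    have e2 : Bi w c = (∑ s, w.1 s * Bi (eQ n s) c) + ∑ s, w.2 s * Bi (eP n s) c := by
      have := clm_decomp (Bi.flip c) w
      simpa using this
    rw [e1, e2, ← Finset.sum_add_distrib, ← Finset.sum_add_distrib,
      ← Finset.sum_sub_distrib, ← Finset.sum_neg_distrib]
    apply Finset.sum_congr rfl
    intro s _
    have hu1 : u.1 s = fderiv ℝ (f i) x (eP n s) := rfl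
    have hu2 : u.2 s = -fderiv ℝ (f i) x (eQ n s) := rfl
    have hw1 : w.1 s = fderiv ℝ (f j) x (eP n s) := rfl
    have hw2 : w.2 s = -fderiv ℝ (f j) x (eQ n s) := rfl
    rw [hu1, hu2, hw1, hw2, hsymi c (eQ n s), hsymi c (eP n s),
      hsymj c (eQ n s), hsymj c (eP n s)]
    ring
  have heq : fderiv ℝ (hamVF (f j)) x u - fderiv ℝ (hamVF (f i)) x w
      = -∑ m, a i j m x • hamVF (f m) x := by
    rw [fderiv_hamVF_apply (hf j) x u, fderiv_hamVF_apply (hf i) x w, ← hBi, ← hBj]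
    refine Prod.ext ?_ ?_
    · funext r
      have := comp (eP n r)
      simp only [Prod.fst_sub, Prod.fst_neg, Prod.fst_sum, Pi.sub_apply, Pi.neg_apply,
        Finset.sum_apply, Prod.smul_fst, Pi.smul_apply, hamVF, smul_eq_mul]
      linarith [this]
    · funext r
      have := comp (eQ n r)
      simp only [Prod.snd_sub, Prod.snd_neg, Prod.snd_sum, Pi.sub_apply, Pi.neg_apply,
        Finset.sum_apply, Prod.smul_snd, Pi.smul_apply, hamVF, smul_eq_mul,
        Finset.sum_neg_distrib, mul_neg]
      linarith [this]
  refine ⟨heq, ?_⟩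
  rw [heq]
  exact neg_mem (Submodule.sum_mem _ fun m _ =>
    Submodule.smul_mem _ _ (Submodule.subset_span (Set.mem_range_self m)))
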